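/- Let G be a minimal counterexample (fewest vertices of degree at least 3, subject to that fewest edges) to the claim that every planar graph with no 4-cycles is (5, 5)-colorable, with a fixed plane embedding. Then a vertex v of degree at least 7 is incident with at most min(floor(d(v)/2), d(v) - 6) terrible 3-faces, where a 3-face is terrible if it is incident with a vertex of degree 2. -/

import Mathlib

open SimpleGraph

/-- `H` is a minor of `G`: branch sets are nonempty, connected, pairwise disjoint,
and edges of `H` are realized between branch sets. -/
def SimpleGraph.IsMinor {W V : Type*} (H : SimpleGraph W) (G : SimpleGraph V) : Prop :=
  ∃ f : W → Set V, (∀ w, (f w).Nonempty) ∧ (∀ w, (G.induce (f w)).Connected) ∧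
    (∀ w w', w ≠ w' → Disjoint (f w) (f w')) ∧
    (∀ w w', H.Adj w w' → ∃ a ∈ f w, ∃ b ∈ f w', G.Adj a b)

/-- A graph is planar iff it has no `K₅` minor and no `K₃,₃` minor (Wagner's theorem). -/
def SimpleGraph.Planar {V : Type*} (G : SimpleGraph V) : Prop :=
  ¬ (completeGraph (Fin 5)).IsMinor G ∧
    ¬ (completeBipartiteGraph (Fin 3) (Fin 3)).IsMinor G

/-- `G` contains no cycle of length `n` (as a subgraph). -/
def SimpleGraph.HasNoCycleOfLength {V : Type*} (G : SimpleGraph V) (n : ℕ) : Prop :=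
  ∀ (v : V) (w : G.Walk v v), w.IsCycle → w.length ≠ n

/-- `f` is a `(d 0, …, d (k-1))`-coloring of `G`: each vertex has at most `d (f v)`
neighbors in its own color class. -/
def SimpleGraph.IsDefectiveColoring {V : Type*} {k : ℕ} (G : SimpleGraph V)
    (d : Fin k → ℕ) (f : V → Fin k) : Prop :=
  ∀ v, {u | G.Adj v u ∧ f u = f v}.ncard ≤ d (f v)

/-- `G` is `(d 0, …, d (k-1))`-colorable. -/
def SimpleGraph.DefectiveColorable {V : Type*} {k : ℕ} (G : SimpleGraph V)
    (d : Fin k → ℕ) : Prop :=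
  ∃ f : V → Fin k, G.IsDefectiveColoring d f

lemma isMinor_mono {W V : Type*} {K : SimpleGraph W} {H G : SimpleGraph V}
    (hle : H ≤ G) (h : K.IsMinor H) : K.IsMinor G := by
  obtain ⟨f, h1, h2, h3, h4⟩ := h
  exact ⟨f, h1, fun w => (h2 w).mono (fun a b hab => hle hab), h3,
    fun w w' hww => by obtain ⟨a, ha, b, hb, hab⟩ := h4 w w' hww; exact ⟨a, ha, b, hb, hle hab⟩⟩

lemma planar_mono {V : Type*} {H G : SimpleGraph V} (hle : H ≤ G) (h : G.Planar) : H.Planar :=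
  ⟨fun hm => h.1 (isMinor_mono hle hm), fun hm => h.2 (isMinor_mono hle hm)⟩

lemma noC4_mono {V : Type*} {H G : SimpleGraph V} (hle : H ≤ G)
    (h : G.HasNoCycleOfLength 4) : H.HasNoCycleOfLength 4 := by
  intro v w hw hlen
  exact h v (w.mapLe hle) (hw.mapLe hle)
    (by rwa [SimpleGraph.Walk.mapLe, SimpleGraph.Walk.length_map])

lemma four_cycle_free {V : Type*} {G : SimpleGraph V} (h4 : G.HasNoCycleOfLength 4)
    {a b c d : V} (hab : G.Adj a b) (hbc : G.Adj b c) (hcd : G.Adj c d) (hda : G.Adj d a)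
    (hac : a ≠ c) (hbd : b ≠ d) : False := by
  refine h4 a (.cons hab (.cons hbc (.cons hcd hda.toWalk))) ?_ (by simp)
  rw [Walk.isCycle_def, Walk.isTrail_def]
  refine ⟨?_, by simp, ?_⟩
  · simp [Sym2.eq, Sym2.rel_iff', hab.ne, hbc.ne, hcd.ne, hda.ne, hab.ne', hbc.ne', hcd.ne',
      hda.ne', hac, hbd, hac.symm, hbd.symm, Prod.ext_iff]
  · simp [hab.ne, hab.ne', hbc.ne, hbc.ne', hcd.ne, hcd.ne', hda.ne, hda.ne', hac, hbd,
      hac.symm, hbd.symm]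

theorem stmt16 (V : Type) [Fintype V] (G : SimpleGraph V)
    (hp : G.Planar) (h4 : G.HasNoCycleOfLength 4)
    (hnc : ¬ G.DefectiveColorable ![5, 5])
    (hmin : ∀ (W : Type) [Fintype W] (H : SimpleGraph W), H.Planar →
      H.HasNoCycleOfLength 4 → ¬ H.DefectiveColorable ![5, 5] →
      {v : V | 3 ≤ (G.neighborSet v).ncard}.ncard
        ≤ {w : W | 3 ≤ (H.neighborSet w).ncard}.ncard ∧
      ({w : W | 3 ≤ (H.neighborSet w).ncard}.ncard
          = {v : V | 3 ≤ (G.neighborSet v).ncard}.ncard →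
        G.edgeSet.ncard ≤ H.edgeSet.ncard))
    (v : V) (hv : 7 ≤ (G.neighborSet v).ncard) :
    -- terrible 3-faces incident with `v`, identified with the triangles through `v`
    -- containing a vertex of degree 2 (in a 4-cycle-free plane graph distinct
    -- 3-faces incident with `v` give distinct such triangles)
    {s : Set V | ∃ x y : V, x ≠ y ∧ s = {x, y} ∧ G.Adj v x ∧ G.Adj v y ∧ G.Adj x y ∧
        ((G.neighborSet x).ncard = 2 ∨ (G.neighborSet y).ncard = 2)}.ncard
      ≤ min ((G.neighborSet v).ncard / 2) ((G.neighborSet v).ncard - 6) := by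
  classical
  set S := {s : Set V | ∃ x y : V, x ≠ y ∧ s = {x, y} ∧ G.Adj v x ∧ G.Adj v y ∧ G.Adj x y ∧
      ((G.neighborSet x).ncard = 2 ∨ (G.neighborSet y).ncard = 2)} with hSdef
  set d := (G.neighborSet v).ncard with hd
  rcases Set.eq_empty_or_nonempty S with hSe | ⟨s₀, hs₀⟩
  · rw [hSe, Set.ncard_empty]; exact Nat.zero_le _
  -- choose representatives, with the first one of degree 2
  have hrep : ∀ s ∈ S, ∃ x y : V, x ≠ y ∧ s = {x, y} ∧ G.Adj v x ∧ G.Adj v y ∧ G.Adj x y ∧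
      (G.neighborSet x).ncard = 2 := by
    rintro s ⟨x, y, hxy, rfl, hvx, hvy, ha, h2 | h2⟩
    · exact ⟨x, y, hxy, rfl, hvx, hvy, ha, h2⟩
    · exact ⟨y, x, hxy.symm, Set.pair_comm x y, hvy, hvx, ha.symm, h2⟩
  have _inst : Nonempty V := ⟨v⟩
  choose! X Y hPne hPs hvX hvY hXY hX2 using hrep
  have hXmem : ∀ s ∈ S, X s ∈ s := fun s hs => (hPs s hs).symm.subset (Set.mem_insert _ _)
  have hYmem : ∀ s ∈ S, Y s ∈ s := fun s hs => (hPs s hs).symm.subset (Set.mem_insert_of_mem _ rfl)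
  -- neighbor set of the degree-2 vertex
  have hNX : ∀ s ∈ S, G.neighborSet (X s) = {v, Y s} := by
    intro s hs
    have hsub : ({v, Y s} : Set V) ⊆ G.neighborSet (X s) := by
      rintro u (rfl | rfl)
      · exact (hvX s hs).symm
      · exact hXY s hs
    refine (Set.eq_of_subset_of_ncard_le hsub ?_ (Set.toFinite _)).symm
    rw [hX2 s hs, Set.ncard_pair (hvY s hs).ne]
  -- two triangles meeting off v are equal (else a 4-cycle appears)
  have hkey : ∀ s ∈ S, ∀ s' ∈ S, ∀ u, u ∈ s → u ∈ s' → s = s' := by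
    intro s hs s' hs' u hu hu'
    by_contra hne
    rw [hPs s hs] at hu
    rw [hPs s' hs'] at hu'
    obtain rfl | rfl := hu
    · obtain h' | h' := hu'
      · -- X s = X s'
        have hYY : Y s ≠ Y s' := by
          intro h
          exact hne (by rw [hPs s hs, hPs s' hs', h', h])
        exact four_cycle_free h4 (hXY s hs).symm (h' ▸ hXY s' hs') (hvY s' hs').symm
          (hvY s hs) hYY (hvX s hs).ne'
      · -- X s = Y s'
        have hYX : Y s ≠ X s' := by
          intro h
          exact hne (by rw [hPs s hs, hPs s' hs', h', h, Set.pair_comm])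
        exact four_cycle_free h4 (hXY s hs).symm (h' ▸ (hXY s' hs').symm) (hvX s' hs').symm
          (hvY s hs) hYX (hvX s hs).ne'
    · obtain h' | h' := hu'
      · -- Y s = X s'
        have hXYne : X s ≠ Y s' := by
          intro h
          exact hne (by rw [hPs s hs, hPs s' hs', ← h', ← h, Set.pair_comm])
        exact four_cycle_free h4 (hXY s hs) (h' ▸ hXY s' hs') (hvY s' hs').symm
          (hvX s hs) hXYne (hvY s hs).ne'
      · -- Y s = Y s'
        have hXX : X s ≠ X s' := by
          intro h
          exact hne (by rw [hPs s hs, hPs s' hs', h', h])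
        exact four_cycle_free h4 (hXY s hs) (h' ▸ (hXY s' hs').symm) (hvX s' hs').symm
          (hvX s hs) hXX (hvY s hs).ne'
  have hXinj : Set.InjOn X S := fun s hs s' hs' h =>
    hkey s hs s' hs' (X s) (hXmem s hs) (h ▸ hXmem s' hs')
  have hYinj : Set.InjOn Y S := fun s hs s' hs' h =>
    hkey s hs s' hs' (Y s) (hYmem s hs) (h ▸ hYmem s' hs')
  have hcross : ∀ s ∈ S, ∀ s' ∈ S, X s ≠ Y s' := by
    intro s hs s' hs' h
    have := hkey s hs s' hs' (X s) (hXmem s hs) (h ▸ hYmem s' hs')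
    exact hPne s hs (this ▸ h)
  set XS := X '' S with hXSdef
  have hXSsub : XS ⊆ G.neighborSet v := by rintro u ⟨s, hs, rfl⟩; exact hvX s hs
  have hYSsub : Y '' S ⊆ G.neighborSet v := by rintro u ⟨s, hs, rfl⟩; exact hvY s hs
  have hdisjXY : Disjoint XS (Y '' S) := by
    rw [Set.disjoint_left]
    rintro u ⟨s, hs, rfl⟩ ⟨s', hs', he⟩
    exact hcross s hs s' hs' he.symm
  have h2t : 2 * S.ncard ≤ d := by
    have hsub := Set.ncard_le_ncard (Set.union_subset hXSsub hYSsub) (Set.toFinite _)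
    rw [Set.ncard_union_eq hdisjXY (Set.toFinite _) (Set.toFinite _),
      Set.ncard_image_of_injOn hXinj, Set.ncard_image_of_injOn hYinj] at hsub
    omega
  -- the reduced graph H : delete all edges at the degree-2 vertices X s
  set H : SimpleGraph V :=
    { Adj := fun a b => G.Adj a b ∧ a ∉ XS ∧ b ∉ XS
      symm := ⟨fun a b h => ⟨h.1.symm, h.2.2, h.2.1⟩⟩
      loopless := ⟨fun a h => G.loopless.irrefl a h.1⟩ } with hHdef
  have hHle : H ≤ G := fun a b h => h.1
  have hvXS : v ∉ XS := by
    rintro ⟨s, hs, h⟩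
    exact (hvX s hs).ne' h
  have hYXS : ∀ s ∈ S, Y s ∉ XS := by
    rintro s hs ⟨s', hs', h⟩
    have heq := hkey s' hs' s hs (X s') (hXmem s' hs') (h ▸ hYmem s hs)
    exact hPne s hs (heq ▸ h)
  have hn3 : {w : V | 3 ≤ (H.neighborSet w).ncard} ⊆ {u : V | 3 ≤ (G.neighborSet u).ncard} :=
    fun u hu => le_trans hu (Set.ncard_le_ncard (fun w hw => hw.1) (Set.toFinite _))
  have hedge : H.edgeSet ⊂ G.edgeSet := by
    constructor
    · exact SimpleGraph.edgeSet_mono hHle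
    · intro hsup
      have hE : s(v, X s₀) ∈ G.edgeSet := by
        rw [SimpleGraph.mem_edgeSet]; exact hvX s₀ hs₀
      have hE' := hsup hE
      rw [SimpleGraph.mem_edgeSet] at hE'
      exact hE'.2.2 ⟨s₀, hs₀, rfl⟩
  -- H is colorable by minimality
  have hHcol : H.DefectiveColorable ![5, 5] := by
    by_contra hH
    obtain ⟨h1, h2⟩ := hmin V H (planar_mono hHle hp) (noC4_mono hHle h4) hH
    have hle3 := Set.ncard_le_ncard hn3 (Set.toFinite _)
    have h5 := h2 (le_antisymm hle3 h1)
    have := Set.ncard_lt_ncard hedge (Set.toFinite _)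
    omega
  obtain ⟨f, hf⟩ := hHcol
  have h55 : ∀ i : Fin 2, (![5, 5] : Fin 2 → ℕ) i = 5 := by decide
  have hf5 : ∀ u, {w | H.Adj u w ∧ f w = f u}.ncard ≤ 5 := fun u => (hf u).trans_eq (h55 (f u))
  have hflip : ∀ c : Fin 2, 1 - c ≠ c := by decide
  -- bad triangles
  set B := {s ∈ S | f (Y s) ≠ f v ∧ 5 ≤ ({w | H.Adj (Y s) w ∧ f w = f (Y s)}).ncard} with hBdef
  have hBS : B ⊆ S := fun s hs => hs.1
  set g : V → Fin 2 := fun u =>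
    if u ∈ XS then (if ∃ s ∈ B, X s = u then f v else 1 - f v) else f u with hgdef
  have hgnX : ∀ u, u ∉ XS → g u = f u := fun u hu => if_neg hu
  have hgv : g v = f v := hgnX v hvXS
  have hgXB : ∀ s ∈ B, g (X s) = f v := by
    intro s hsB
    rw [hgdef]
    simp only
    rw [if_pos ⟨s, hBS hsB, rfl⟩, if_pos ⟨s, hsB, rfl⟩]
  have hgXnB : ∀ s ∈ S, s ∉ B → g (X s) = 1 - f v := by
    intro s hs hsB
    rw [hgdef]
    simp only
    rw [if_pos ⟨s, hs, rfl⟩, if_neg]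
    rintro ⟨s', hs'B, he⟩
    exact hsB (hXinj (hBS hs'B) hs he ▸ hs'B)
  -- if any neighbor w of Y s (s ∈ S) is some X s', then s' = s
  have hYnbr : ∀ s ∈ S, ∀ w, G.Adj (Y s) w → w ∈ XS → w = X s := by
    rintro s hs w hadj ⟨s', hs', rfl⟩
    have hmem : Y s ∈ G.neighborSet (X s') := hadj.symm
    rw [hNX s' hs'] at hmem
    obtain h | h := hmem
    · exact absurd h (hvY s hs).ne'
    · have heq : s = s' := hkey s hs s' hs' (Y s) (hYmem s hs) (by rw [h]; exact hYmem s' hs')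
      exact (congrArg X heq).symm
  -- the crucial inequality: extension must fail
  have hbig : 6 ≤ {w | H.Adj v w ∧ f w = f v}.ncard + B.ncard := by
    by_contra hsm
    push_neg at hsm
    apply hnc
    refine ⟨g, ?_⟩
    intro u
    rw [h55 (g u)]
    by_cases hu1 : u ∈ XS
    · -- u is a degree-2 vertex, at most 2 neighbors
      obtain ⟨s, hs, rfl⟩ := hu1
      have hsub : {w | G.Adj (X s) w ∧ g w = g (X s)} ⊆ ({v, Y s} : Set V) := by
        intro w hw
        have : w ∈ G.neighborSet (X s) := hw.1
        rwa [hNX s hs] at this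
      calc {w | G.Adj (X s) w ∧ g w = g (X s)}.ncard
          ≤ ({v, Y s} : Set V).ncard := Set.ncard_le_ncard hsub (Set.toFinite _)
        _ = 2 := Set.ncard_pair (hvY s hs).ne
        _ ≤ 5 := by omega
    by_cases hu2 : u = v
    · subst hu2
      have hsub : {w | G.Adj u w ∧ g w = g u} ⊆
          {w | H.Adj u w ∧ f w = f u} ∪ (X '' B) := by
        rintro w ⟨hadj, hcol⟩
        by_cases hw : w ∈ XS
        · obtain ⟨s, hs, rfl⟩ := hw
          by_cases hsB : s ∈ B
          · exact Or.inr ⟨s, hsB, rfl⟩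
          · rw [hgXnB s hs hsB, hgv] at hcol
            exact absurd hcol (hflip (f u))
        · refine Or.inl ⟨⟨hadj, hu1, hw⟩, ?_⟩
          rw [← hgnX w hw, hcol, hgv]
      calc {w | G.Adj u w ∧ g w = g u}.ncard
          ≤ ({w | H.Adj u w ∧ f w = f u} ∪ (X '' B)).ncard :=
            Set.ncard_le_ncard hsub (Set.toFinite _)
        _ ≤ {w | H.Adj u w ∧ f w = f u}.ncard + (X '' B).ncard := Set.ncard_union_le _ _
        _ = {w | H.Adj u w ∧ f w = f u}.ncard + B.ncard := by
            rw [Set.ncard_image_of_injOn (hXinj.mono hBS)]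
        _ ≤ 5 := by omega
    by_cases hu3 : ∃ s ∈ S, Y s = u
    · obtain ⟨s, hs, rfl⟩ := hu3
      have hgu : g (Y s) = f (Y s) := hgnX _ (hYXS s hs)
      have hsubH : ∀ w ∈ {w | G.Adj (Y s) w ∧ g w = g (Y s)}, w ∉ XS →
          w ∈ {w | H.Adj (Y s) w ∧ f w = f (Y s)} := by
        rintro w ⟨hadj, hcol⟩ hw
        exact ⟨⟨hadj, hYXS s hs, hw⟩, by rw [← hgnX w hw, hcol, hgu]⟩
      by_cases hcase : s ∈ B ∨ f (Y s) = f v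
      · -- X s is colored differently from Y s, so it does not count
        have hXs : g (X s) ≠ f (Y s) := by
          obtain hsB | hc := hcase
          · rw [hgXB s hsB]; exact fun h => hsB.2.1 h.symm
          · rw [hgXnB s hs (fun hsB => hsB.2.1 hc), hc]; exact hflip (f v)
        have hsub : {w | G.Adj (Y s) w ∧ g w = g (Y s)} ⊆
            {w | H.Adj (Y s) w ∧ f w = f (Y s)} := by
          intro w hw
          by_cases hwXS : w ∈ XS
          · exfalso
            have := hYnbr s hs w hw.1 hwXS
            subst this
            rw [hgu] at hw
            exact hXs hw.2
          · exact hsubH w hw hwXS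
        exact le_trans (Set.ncard_le_ncard hsub (Set.toFinite _)) (hf5 (Y s))
      · push_neg at hcase
        obtain ⟨hsB, hc⟩ := hcase
        have hcnt : {w | H.Adj (Y s) w ∧ f w = f (Y s)}.ncard ≤ 4 := by
          by_contra hge
          exact hsB ⟨hs, hc, by omega⟩
        have hsub : {w | G.Adj (Y s) w ∧ g w = g (Y s)} ⊆
            {w | H.Adj (Y s) w ∧ f w = f (Y s)} ∪ {X s} := by
          intro w hw
          by_cases hwXS : w ∈ XS
          · exact Or.inr (hYnbr s hs w hw.1 hwXS)
          · exact Or.inl (hsubH w hw hwXS)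
        calc {w | G.Adj (Y s) w ∧ g w = g (Y s)}.ncard
            ≤ ({w | H.Adj (Y s) w ∧ f w = f (Y s)} ∪ {X s}).ncard :=
              Set.ncard_le_ncard hsub (Set.toFinite _)
          _ ≤ {w | H.Adj (Y s) w ∧ f w = f (Y s)}.ncard + ({X s} : Set V).ncard :=
              Set.ncard_union_le _ _
          _ ≤ 5 := by rw [Set.ncard_singleton]; omega
    · -- generic vertex: unaffected
      have hsub : {w | G.Adj u w ∧ g w = g u} ⊆ {w | H.Adj u w ∧ f w = f u} := by
        rintro w ⟨hadj, hcol⟩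
        by_cases hw : w ∈ XS
        · exfalso
          obtain ⟨s, hs, rfl⟩ := hw
          have hmem : u ∈ G.neighborSet (X s) := hadj.symm
          rw [hNX s hs] at hmem
          obtain h | h := hmem
          · exact hu2 h
          · exact hu3 ⟨s, hs, h.symm⟩
        · exact ⟨⟨hadj, hu1, hw⟩, by rw [← hgnX w hw, hcol, hgnX u hu1]⟩
      exact le_trans (Set.ncard_le_ncard hsub (Set.toFinite _)) (hf5 u)
  -- count: the set of same-colored H-neighbors of v and the Y-images of bad triangles
  -- are disjoint subsets of N(v) \ XS
  have hcount : {w | H.Adj v w ∧ f w = f v}.ncard + B.ncard ≤ d - S.ncard := by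
    have hdisj2 : Disjoint {w | H.Adj v w ∧ f w = f v} (Y '' B) := by
      rw [Set.disjoint_left]
      rintro w hw ⟨s, hsB, rfl⟩
      exact hsB.2.1 hw.2
    have hsub2 : {w | H.Adj v w ∧ f w = f v} ∪ (Y '' B) ⊆ G.neighborSet v \ XS := by
      rintro w (hw | ⟨s, hsB, rfl⟩)
      · exact ⟨hw.1.1, hw.1.2.2⟩
      · exact ⟨hvY s (hBS hsB), hYXS s (hBS hsB)⟩
    have hle2 := Set.ncard_le_ncard hsub2 (Set.toFinite _)
    rw [Set.ncard_union_eq hdisj2 (Set.toFinite _) (Set.toFinite _),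
      Set.ncard_image_of_injOn (hYinj.mono hBS),
      Set.ncard_diff hXSsub (Set.toFinite _),
      Set.ncard_image_of_injOn hXinj] at hle2
    exact hle2
  have hfin : S.ncard + 6 ≤ d := by omega
  omega
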